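/- Let F : ℝ^d → ℝ^d be L-Lipschitz, let e > 0, let V̂ be a symmetric positive definite real d×d matrix with e·I ≼ V̂, and let γ > 0. Given z_t ∈ ℝ^d, define z_{t+1/2} = z_t − γ·V̂⁻¹F(z_t) and z_{t+1} = z_t − γ·V̂⁻¹F(z_{t+1/2}). Then for every z ∈ ℝ^d: ‖z_{t+1} − z‖²_{V̂} ≤ ‖z_t − z‖²_{V̂} − 2γ·⟨F(z_{t+1/2}), z_{t+1/2} − z⟩ − (1 − γ²L²/e²)·‖z_{t+1/2} − z_t‖²_{V̂}. -/

import Mathlib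

open RealInnerProductSpace
open Matrix

/-- The one-iteration descent inequality for the Scaled Extra Gradient method
(deterministic form of inequality (t1) in the proof of Theorem 1):
`‖z_{t+1} − z‖²_{V̂} ≤ ‖z_t − z‖²_{V̂} − 2γ⟨F(z_{t+1/2}), z_{t+1/2} − z⟩
  − (1 − γ²L²/e²)‖z_{t+1/2} − z_t‖²_{V̂}`. -/
theorem scaled_extragradient_descent
    (d : ℕ) (L : ℝ)
    (F : EuclideanSpace ℝ (Fin d) → EuclideanSpace ℝ (Fin d))
    (hFlip : ∀ z₁ z₂, ‖F z₁ - F z₂‖ ≤ L * ‖z₁ - z₂‖)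
    (e : ℝ) (he : 0 < e)
    (V : Matrix (Fin d) (Fin d) ℝ)
    (hVsymm : V.IsHermitian) (hVpd : V.PosDef)
    (hVe : (V - e • (1 : Matrix (Fin d) (Fin d) ℝ)).PosSemidef)
    (γ : ℝ) (hγ : 0 < γ)
    (zt zth zt1 : EuclideanSpace ℝ (Fin d))
    (hzth : zth = zt - γ • (Matrix.toEuclideanLin V⁻¹) (F zt))
    (hzt1 : zt1 = zt - γ • (Matrix.toEuclideanLin V⁻¹) (F zth)) :
    ∀ z : EuclideanSpace ℝ (Fin d),
      ⟪zt1 - z, (Matrix.toEuclideanLin V) (zt1 - z)⟫ ≤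
        ⟪zt - z, (Matrix.toEuclideanLin V) (zt - z)⟫ -
          2 * γ * ⟪F zth, zth - z⟫ -
          (1 - γ ^ 2 * L ^ 2 / e ^ 2) *
            ⟪zth - zt, (Matrix.toEuclideanLin V) (zth - zt)⟫ := by
  intro z
  have hdet : IsUnit V.det := isUnit_iff_ne_zero.mpr (ne_of_gt hVpd.det_pos)
  set S := Matrix.toEuclideanLin V with hS
  set N := Matrix.toEuclideanLin V⁻¹ with hN
  have hcomp : ∀ x, S (N x) = x := by
    intro x
    rw [hS, hN, Matrix.toEuclideanLin_apply, Matrix.toEuclideanLin_apply]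
    simp [Matrix.mulVec_mulVec, Matrix.mul_nonsing_inv V hdet]
  have hsymS : ∀ x y : EuclideanSpace ℝ (Fin d), ⟪S x, y⟫ = ⟪x, S y⟫ :=
    Matrix.isHermitian_iff_isSymmetric.mp hVsymm
  have hsymN : ∀ x y : EuclideanSpace ℝ (Fin d), ⟪N x, y⟫ = ⟪x, N y⟫ :=
    Matrix.isHermitian_iff_isSymmetric.mp hVsymm.inv
  have hNS : ∀ x y : EuclideanSpace ℝ (Fin d), ⟪N x, S y⟫ = ⟪x, y⟫ := by
    intro x y; rw [← hsymS, hcomp]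
  have hlow : ∀ x : EuclideanSpace ℝ (Fin d), e * ‖x‖ ^ 2 ≤ ⟪x, S x⟫ := by
    intro x
    have h := hVe.re_dotProduct_nonneg (WithLp.equiv 2 _ x)
    have h2 : ⟪x, S x⟫ =
        dotProduct (WithLp.equiv 2 _ x) (V *ᵥ WithLp.equiv 2 _ x) := by
      rw [hS, EuclideanSpace.inner_eq_star_dotProduct]; exact dotProduct_comm _ _
    have h3 : ‖x‖ ^ 2 = dotProduct (WithLp.equiv 2 _ x) (WithLp.equiv 2 _ x) := by
      rw [← real_inner_self_eq_norm_sq, EuclideanSpace.inner_eq_star_dotProduct]; rfl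
    simp only [Matrix.sub_mulVec, Matrix.smul_mulVec, Matrix.one_mulVec,
      dotProduct_sub, dotProduct_smul, RCLike.re_to_real, smul_eq_mul,
      star_trivial] at h
    rw [h2, h3]; linarith
  -- the exact identity
  have key : ⟪zt1 - z, S (zt1 - z)⟫ =
      ⟪zt - z, S (zt - z)⟫ - 2 * γ * ⟪F zth, zth - z⟫
        - ⟪zth - zt, S (zth - zt)⟫ + ⟪zt1 - zth, S (zt1 - zth)⟫ := by
    subst hzth hzt1
    simp only [map_sub, _root_.map_smul, hcomp, inner_sub_left, inner_sub_right,
      inner_smul_left, inner_smul_right, conj_trivial, hNS]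
    linear_combination
      (-γ) * real_inner_comm (F (zt - γ • N (F zt))) zt +
      (-γ) * real_inner_comm z (F (zt - γ • N (F zt))) +
      (-γ ^ 2) * real_inner_comm (N (F zt)) (F (zt - γ • N (F zt))) +
      γ ^ 2 * hsymN (F (zt - γ • N (F zt))) (F zt)
  -- the Lipschitz bound
  have hub : ∀ u : EuclideanSpace ℝ (Fin d), e * ⟪N u, u⟫ ≤ ‖u‖ ^ 2 := by
    intro u
    have h1 : e * ‖N u‖ ^ 2 ≤ ⟪N u, S (N u)⟫ := hlow (N u)
    rw [hcomp] at h1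
    have h2 : ⟪N u, u⟫ ≤ ‖N u‖ * ‖u‖ := real_inner_le_norm _ _
    nlinarith [sq_nonneg (‖u‖ - e * ‖N u‖), norm_nonneg u, norm_nonneg (N u),
      mul_le_mul_of_nonneg_left h2 he.le]
  have hbound : ⟪zt1 - zth, S (zt1 - zth)⟫ ≤
      γ ^ 2 * L ^ 2 / e ^ 2 * ⟪zth - zt, S (zth - zt)⟫ := by
    set u := F zt - F zth with hu
    have hdiff : zt1 - zth = γ • N u := by
      rw [hzth, hzt1, hu, map_sub, smul_sub]; abel
    have hdiff2 : zth - zt = -(γ • N (F zt)) := by rw [hzth]; abel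
    have heq : ⟪zt1 - zth, S (zt1 - zth)⟫ = γ ^ 2 * ⟪N u, u⟫ := by
      rw [hdiff, _root_.map_smul, real_inner_smul_left, real_inner_smul_right, hcomp]; ring
    have hA : e * ⟪N u, u⟫ ≤ ‖u‖ ^ 2 := hub u
    have hB : ‖u‖ ≤ L * ‖zth - zt‖ := by
      rw [hu, norm_sub_rev zth zt]; exact hFlip zt zth
    have hB2 : ‖u‖ ^ 2 ≤ L ^ 2 * ‖zth - zt‖ ^ 2 := by
      nlinarith [norm_nonneg u, norm_nonneg (zth - zt)]
    have hC : e * ‖zth - zt‖ ^ 2 ≤ ⟪zth - zt, S (zth - zt)⟫ := hlow _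
    rw [heq, div_mul_eq_mul_div, le_div_iff₀ (by positivity : (0:ℝ) < e ^ 2)]
    have hD : e * (e * ⟪N u, u⟫) ≤ e * ‖u‖ ^ 2 := mul_le_mul_of_nonneg_left hA he.le
    have hE : e * ‖u‖ ^ 2 ≤ L ^ 2 * (e * ‖zth - zt‖ ^ 2) := by
      have := mul_le_mul_of_nonneg_left hB2 he.le
      linarith
    have hF : L ^ 2 * (e * ‖zth - zt‖ ^ 2) ≤ L ^ 2 * ⟪zth - zt, S (zth - zt)⟫ :=
      mul_le_mul_of_nonneg_left hC (sq_nonneg L)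
    nlinarith [sq_nonneg γ, mul_le_mul_of_nonneg_left (hD.trans (hE.trans hF)) (sq_nonneg γ)]
  linarith [key, hbound]
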